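/- Let p ≥ 13 be an integer such that 4p^4 - 1 is square-free, and let R = Z[√(4p^4 - 1)] = { x + y·√(4p^4 - 1) : x, y ∈ Z } ⊆ R. The system x1 = 1, x2·x3 = x1, x2 + x3 = x4, x5·x5 = x4 has a solution in R^5 (namely (1, 2p^2 + √(4p^4-1), 2p^2 - √(4p^4-1), 4p^2, 2p)), but every solution (x1,...,x5) ∈ R^5 satisfies |x2| > 2^(2^3) = 256 or |x3| > 2^(2^3) = 256. -/

import Mathlib

set_option maxHeartbeats 1000000 in
theorem stmt_4 (p : ℤ) (hp : 13 ≤ p) (hsf : Squarefree (4 * p ^ 4 - 1)) :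
    (∃ x : Fin 5 → ℝ,
      (∀ i, ∃ u v : ℤ, x i = (u : ℝ) + (v : ℝ) * Real.sqrt ((4 * p ^ 4 - 1 : ℤ) : ℝ)) ∧
      x 0 = 1 ∧ x 1 * x 2 = x 0 ∧ x 1 + x 2 = x 3 ∧ x 4 * x 4 = x 3) ∧
    (∀ x : Fin 5 → ℝ,
      (∀ i, ∃ u v : ℤ, x i = (u : ℝ) + (v : ℝ) * Real.sqrt ((4 * p ^ 4 - 1 : ℤ) : ℝ)) →
      x 0 = 1 → x 1 * x 2 = x 0 → x 1 + x 2 = x 3 → x 4 * x 4 = x 3 →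
      |x 1| > 2 ^ 2 ^ 3 ∨ |x 2| > 2 ^ 2 ^ 3) := by
  set D : ℤ := 4 * p ^ 4 - 1 with hDdef
  have hDbig : (65537 : ℤ) ≤ D := by
    nlinarith [pow_le_pow_left₀ (by norm_num : (0:ℤ) ≤ 13) hp 4]
  have hD0 : (0:ℤ) ≤ D := by linarith
  set s : ℝ := Real.sqrt ((D : ℤ) : ℝ) with hsdef
  have hs0 : 0 ≤ s := Real.sqrt_nonneg _
  have hs2 : s ^ 2 = (D : ℝ) := Real.sq_sqrt (by exact_mod_cast hD0)
  have hirr : Irrational s := by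
    rw [hsdef, irrational_sqrt_intCast_iff_of_nonneg hD0]
    intro ⟨r, hr⟩
    have : IsUnit r := hsf r (by rw [hr])
    rcases Int.isUnit_iff.mp this with h | h <;> subst h <;> omega
  have uniq : ∀ u v u' v' : ℤ, (u:ℝ) + v * s = u' + v' * s → u = u' ∧ v = v' := by
    intro u v u' v' h
    have hv : v = v' := by
      by_contra hv
      have hvv : ((v' : ℝ) - v) ≠ 0 := by
        intro h0
        apply hv
        have : (v:ℝ) = v' := by linarith
        exact_mod_cast this
      refine hirr ⟨(u - u' : ℚ) / ((v' : ℚ) - v), ?_⟩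
      have hvvq : ((v' : ℚ) - v) ≠ 0 := by
        intro h0; apply hvv; exact_mod_cast h0
      push_cast
      rw [div_eq_iff (by exact_mod_cast hvv)]
      linarith
    subst hv
    have : (u:ℝ) = u' := by linarith
    exact ⟨by exact_mod_cast this, rfl⟩
  have hsgt : (256 : ℝ) < s := by
    nlinarith [hs2, hs0, (by exact_mod_cast hDbig : (65537:ℝ) ≤ (D:ℝ))]
  constructor
  · refine ⟨![1, 2*(p:ℝ)^2 + s, 2*(p:ℝ)^2 - s, 4*(p:ℝ)^2, 2*(p:ℝ)], ?_, ?_, ?_, ?_, ?_⟩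
    · intro i
      fin_cases i
      · exact ⟨1, 0, by norm_num⟩
      · exact ⟨2*p^2, 1, by show 2*(p:ℝ)^2 + s = _; push_cast; ring⟩
      · exact ⟨2*p^2, -1, by show 2*(p:ℝ)^2 - s = _; push_cast; ring⟩
      · exact ⟨4*p^2, 0, by show 4*(p:ℝ)^2 = _; push_cast; ring⟩
      · exact ⟨2*p, 0, by show 2*(p:ℝ) = _; push_cast; ring⟩
    · rfl
    · show (2*(p:ℝ)^2 + s) * (2*(p:ℝ)^2 - s) = 1
      have hDr : ((D:ℤ):ℝ) = 4*(p:ℝ)^4 - 1 := by rw [hDdef]; push_cast; ring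
      linear_combination -hs2 - hDr
    · show (2*(p:ℝ)^2 + s) + (2*(p:ℝ)^2 - s) = 4*(p:ℝ)^2
      ring
    · show (2*(p:ℝ)) * (2*(p:ℝ)) = 4*(p:ℝ)^2
      ring
  · intro x hmem h0 h12 h123 h44
    obtain ⟨a, b, hab⟩ := hmem 1
    obtain ⟨c, d, hcd⟩ := hmem 2
    obtain ⟨e, f, hef⟩ := hmem 4
    rw [h0] at h12
    have hprod : ((a*c + b*d*D : ℤ) : ℝ) + ((a*d + b*c : ℤ) : ℝ) * s = (1:ℤ) + (0:ℤ) * s := by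
      rw [hab, hcd] at h12
      push_cast
      linear_combination h12 - (b:ℝ)*(d:ℝ)*hs2
    obtain ⟨h1, h2⟩ := uniq _ _ _ _ hprod
    by_cases hb : b = 0
    · subst hb
      have ha0 : a ≠ 0 := by rintro rfl; simp at h1
      have hd0 : d = 0 := by
        rcases mul_eq_zero.mp (by linarith [h2] : a * d = 0) with h | h
        · exact absurd h ha0
        · exact h
      subst hd0
      have h1' : a * c = 1 := by simpa using h1
      have hx3 : x 3 = ((a + c : ℤ) : ℝ) := by
        rw [← h123, hab, hcd]; push_cast; ring
      have hsq : ((e*e + f*f*D : ℤ) : ℝ) + ((2*(e*f) : ℤ) : ℝ) * s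
          = ((a+c : ℤ) : ℝ) + ((0:ℤ):ℝ) * s := by
        rw [hef, hx3] at h44
        push_cast
        push_cast at h44
        linear_combination h44 - (f:ℝ)*(f:ℝ)*hs2
      obtain ⟨g1, g2⟩ := uniq _ _ _ _ hsq
      have hac : a = 1 ∧ c = 1 ∨ a = -1 ∧ c = -1 :=
        Int.mul_eq_one_iff_eq_one_or_neg_one.mp h1'
      exfalso
      have hef0 : e * f = 0 := by linarith
      rcases mul_eq_zero.mp hef0 with h | h
      · subst h
        simp at g1
        rcases eq_or_ne f 0 with rfl | hf
        · simp at g1; omega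
        · have h1f : (1:ℤ) ≤ f * f := by rcases lt_or_gt_of_ne hf with h'|h' <;> nlinarith
          rcases hac with ⟨rfl, rfl⟩ | ⟨rfl, rfl⟩
          · nlinarith [g1, hDbig, h1f]
          · nlinarith [g1, hDbig, h1f]
      · subst h
        simp at g1
        rcases hac with ⟨rfl, rfl⟩ | ⟨rfl, rfl⟩
        · have hu : e ≤ 1 := by nlinarith [g1]
          have hl' : -1 ≤ e := by nlinarith [g1]
          interval_cases e <;> omega
        · nlinarith [g1, mul_self_nonneg e]
    · -- b ≠ 0 : unit estimate
      have hαne : x 1 ≠ 0 := by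
        intro h; rw [h, zero_mul] at h12; exact one_ne_zero h12.symm
      have hbne : ((b:ℝ)) ≠ 0 := Int.cast_ne_zero.mpr hb
      have hconj_ne : (a:ℝ) - b * s ≠ 0 := by
        intro h
        refine hirr ⟨(a:ℚ)/(b:ℚ), ?_⟩
        have hbq : ((b:ℚ)) ≠ 0 := Int.cast_ne_zero.mpr hb
        push_cast
        rw [div_eq_iff hbne]
        linarith
      set N : ℤ := a^2 - b^2 * D with hN
      have hNr : ((N:ℤ):ℝ) = (a:ℝ)^2 - (b:ℝ)^2 * ((D:ℤ):ℝ) := by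
        rw [hN]; push_cast; ring
      have hNval : x 1 * ((a:ℝ) - b * s) = (N:ℝ) := by
        rw [hab]; push_cast
        linear_combination -hNr - (b:ℝ)^2 * hs2
      have hN0 : N ≠ 0 := by
        intro h
        rw [h] at hNval
        push_cast at hNval
        rcases mul_eq_zero.mp hNval with h' | h'
        · exact hαne h'
        · exact hconj_ne h'
      have hNx2 : ((N*c : ℤ):ℝ) + ((N*d : ℤ):ℝ) * s = ((a:ℤ):ℝ) + ((-b : ℤ):ℝ) * s := by
        have hthis : (N:ℝ) * x 2 = (a:ℝ) - b * s := by
          have := hNval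
          calc (N:ℝ) * x 2 = x 1 * ((a:ℝ) - b*s) * x 2 := by rw [hNval]
            _ = x 1 * x 2 * ((a:ℝ) - b*s) := by ring
            _ = (a:ℝ) - b*s := by rw [h12, one_mul]
        rw [hcd] at hthis
        push_cast
        linear_combination hthis
      obtain ⟨k1, k2⟩ := uniq _ _ _ _ hNx2
      have hNN : N = N^2 * (c^2 - d^2 * D) := by
        linear_combination hN - ((N:ℤ)*c + a)*k1 + D*((N:ℤ)*d - b)*k2
      have hcan : 1 = N * (c^2 - d^2*D) := by
        apply mul_left_cancel₀ hN0
        linear_combination hNN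
      have hNpm : N = 1 ∨ N = -1 := by
        have hunit : IsUnit N := IsUnit.of_mul_eq_one _ hcan.symm
        exact Int.isUnit_iff.mp hunit
      have hbge : (1:ℝ) ≤ |(b:ℝ)| := by
        have h1b : (1:ℤ) ≤ |b| := Int.one_le_abs hb
        have : ((1:ℤ):ℝ) ≤ ((|b|:ℤ):ℝ) := by exact_mod_cast h1b
        rw [Int.cast_abs] at this
        simpa using this
      have key : 2 * s ≤ |x 1| + |x 2| := by
        rcases hNpm with h | h
        · rw [h] at k1 k2
          have hc : c = a := by omega
          have hd : d = -b := by omega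
          have hsum : x 1 - x 2 = 2 * (b:ℝ) * s := by
            rw [hab, hcd, hc, hd]; push_cast; ring
          calc 2 * s ≤ 2 * |(b:ℝ)| * s := by nlinarith [hbge, hs0]
            _ = |x 1 - x 2| := by
                rw [hsum, abs_mul, abs_mul, abs_of_nonneg hs0, abs_two]
            _ ≤ |x 1| + |x 2| := abs_sub _ _
        · rw [h] at k1 k2
          have hc : c = -a := by omega
          have hd : d = b := by omega
          have hsum : x 1 + x 2 = 2 * (b:ℝ) * s := by
            rw [hab, hcd, hc, hd]; push_cast; ring
          calc 2 * s ≤ 2 * |(b:ℝ)| * s := by nlinarith [hbge, hs0]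
            _ = |x 1 + x 2| := by
                rw [hsum, abs_mul, abs_mul, abs_of_nonneg hs0, abs_two]
            _ ≤ |x 1| + |x 2| := abs_add_le _ _
      by_contra hcon
      push_neg at hcon
      obtain ⟨hl, hr⟩ := hcon
      norm_num at hl hr
      linarith [key, hsgt, hl, hr]
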